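/- Let C ⊆ 𝔽₂ⁿ be a singly-even self-dual binary code, Λ(C) its Construction A lattice, and δ = (1,...,1)/√2. Then the theta functions of the shifted cosets satisfy Θ_{Λ_even + δ/2}(q) = Θ_{Λ_odd + δ/2}(q) = (θ₂(q)θ₃(q))^{n/2}/2, where Λ_even/odd = {λ ∈ Λ(C) : δ·λ even/odd}. -/

import Mathlib

open scoped BigOperators

namespace PaperFormal

/-- Standard dot product on `ℝⁿ`. -/
def dot {n : ℕ} (x y : Fin n → ℝ) : ℝ := ∑ i, x i * y i

/-- Squared norm. -/
def nsq {n : ℕ} (x : Fin n → ℝ) : ℝ := dot x x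

/-- The dual of a set of vectors: all vectors pairing integrally with every element. -/
def dualSet {n : ℕ} (L : Set (Fin n → ℝ)) : Set (Fin n → ℝ) :=
  {x | ∀ l ∈ L, ∃ k : ℤ, dot l x = (k : ℝ)}

/-- The even-norm part `Λ₀` of a lattice. -/
def evenSub {n : ℕ} (L : Set (Fin n → ℝ)) : Set (Fin n → ℝ) :=
  {l | l ∈ L ∧ ∃ k : ℤ, dot l l = 2 * (k : ℝ)}

/-- The shadow `S(Λ) = Λ₀* \ Λ`. -/
def shadow {n : ℕ} (L : Set (Fin n → ℝ)) : Set (Fin n → ℝ) :=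
  dualSet (evenSub L) \ L

/-- An odd self-dual lattice: equal to its dual, and containing a vector of odd norm. -/
def IsOddSelfDual {n : ℕ} (L : Set (Fin n → ℝ)) : Prop :=
  L = dualSet L ∧ ∃ v ∈ L, ∃ k : ℤ, dot v v = 2 * (k : ℝ) + 1

/-- `χ` is a characteristic vector of `L`: `λ·λ ≡ χ·λ (mod 2)` for all `λ ∈ L`. -/
def IsCharacteristic {n : ℕ} (L : Set (Fin n → ℝ)) (χ : Fin n → ℝ) : Prop :=
  χ ∈ L ∧ ∀ l ∈ L, ∃ k : ℤ, dot l l - dot χ l = 2 * (k : ℝ)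

/-- `Λ_{δ-even}`. -/
def deltaEven {n : ℕ} (L : Set (Fin n → ℝ)) (δ : Fin n → ℝ) : Set (Fin n → ℝ) :=
  {l | l ∈ L ∧ ∃ k : ℤ, dot δ l = 2 * (k : ℝ)}

/-- `Λ_{δ-odd}`. -/
def deltaOdd {n : ℕ} (L : Set (Fin n → ℝ)) (δ : Fin n → ℝ) : Set (Fin n → ℝ) :=
  {l | l ∈ L ∧ ∃ k : ℤ, dot δ l = 2 * (k : ℝ) + 1}

/-- Translate a set of vectors by `v`. -/
def shiftSet {n : ℕ} (A : Set (Fin n → ℝ)) (v : Fin n → ℝ) : Set (Fin n → ℝ) :=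
  (fun x => x + v) '' A

/-- The orbifold lattice `Λ⁺ = Λ_even ∪ (Λ_even + δ/2)`. -/
def orbPlus {n : ℕ} (L : Set (Fin n → ℝ)) (δ : Fin n → ℝ) : Set (Fin n → ℝ) :=
  deltaEven L δ ∪ shiftSet (deltaEven L δ) ((2 : ℝ)⁻¹ • δ)

/-- The orbifold lattice `Λ⁻ = Λ_even ∪ (Λ_odd + δ/2)`. -/
def orbMinus {n : ℕ} (L : Set (Fin n → ℝ)) (δ : Fin n → ℝ) : Set (Fin n → ℝ) :=
  deltaEven L δ ∪ shiftSet (deltaOdd L δ) ((2 : ℝ)⁻¹ • δ)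

/-- The gauging condition for a shift vector: `δ ∈ Λ`, `δ/2 ∉ Λ ∪ S(Λ)`, `δ² ∈ 4ℤ`. -/
def GaugingCondition {n : ℕ} (L : Set (Fin n → ℝ)) (δ : Fin n → ℝ) : Prop :=
  δ ∈ L ∧ (2 : ℝ)⁻¹ • δ ∉ L ∧ (2 : ℝ)⁻¹ • δ ∉ shadow L ∧
    ∃ k : ℤ, dot δ δ = 4 * (k : ℝ)

/-- Inner product of codewords, valued in `ℤ/k`. -/
def codeDot {n k : ℕ} (c c' : Fin n → ZMod k) : ZMod k := ∑ i, c i * c' i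

/-- The dual code. -/
def dualCode {n k : ℕ} (C : Set (Fin n → ZMod k)) : Set (Fin n → ZMod k) :=
  {x | ∀ c ∈ C, codeDot c x = 0}

/-- Hamming weight of a binary codeword. -/
def wt {n : ℕ} (c : Fin n → ZMod 2) : ℕ :=
  (Finset.univ.filter fun i => c i = 1).card

/-- A singly-even self-dual binary code: self-dual, with some codeword of weight `≢ 0 (mod 4)`. -/
def IsSinglyEvenSelfDual {n : ℕ} (C : Set (Fin n → ZMod 2)) : Prop :=
  C = dualCode C ∧ ∃ c ∈ C, ¬ (4 ∣ wt c)

/-- Lift of a binary codeword to `{0,1}ⁿ ⊆ ℝⁿ`. -/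
def liftBin {n : ℕ} (c : Fin n → ZMod 2) : Fin n → ℝ := fun i => ((c i).val : ℝ)

/-- Construction A lattice of a binary code: `Λ(C) = {(c + 2m)/√2}`. -/
def constructionA {n : ℕ} (C : Set (Fin n → ZMod 2)) : Set (Fin n → ℝ) :=
  {x | ∃ c ∈ C, ∃ m : Fin n → ℤ,
    x = fun i => (liftBin c i + 2 * (m i : ℝ)) / Real.sqrt 2}

/-- Construction A lattice of a `ℤ/k` code: `Λ(C) = {(c + km)/√k}`. -/
def constructionAZ {n : ℕ} (k : ℕ) (C : Set (Fin n → ZMod k)) : Set (Fin n → ℝ) :=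
  {x | ∃ c ∈ C, ∃ m : Fin n → ℤ,
    x = fun i => (((c i).val : ℝ) + (k : ℝ) * (m i : ℝ)) / Real.sqrt k}

/-- The shift vector `δ = (1,…,1)/√2`. -/
noncomputable def deltaAll (n : ℕ) : Fin n → ℝ := fun _ => 1 / Real.sqrt 2

/-- Theta function of a set of vectors, `Θ_L(q) = Σ_{λ∈L} q^{λ²/2}`. -/
noncomputable def thetaSet {n : ℕ} (L : Set (Fin n → ℝ)) (q : ℝ) : ℝ :=
  ∑' l : L, q ^ (dot (l : Fin n → ℝ) (l : Fin n → ℝ) / 2)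

/-- Jacobi theta function `θ₂(q) = Σ_m q^{(m+1/2)²/2}`. -/
noncomputable def theta2 (q : ℝ) : ℝ := ∑' m : ℤ, q ^ (((m : ℝ) + 1 / 2) ^ 2 / 2)

/-- Jacobi theta function `θ₃(q) = Σ_m q^{m²/2}`. -/
noncomputable def theta3 (q : ℝ) : ℝ := ∑' m : ℤ, q ^ ((m : ℝ) ^ 2 / 2)

/-- Jacobi theta function `θ₄(q) = Σ_m (−1)^m q^{m²/2}`. -/
noncomputable def theta4 (q : ℝ) : ℝ := ∑' m : ℤ, (-1 : ℝ) ^ m * q ^ ((m : ℝ) ^ 2 / 2)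

/-- `ℤⁿ₊`: integer vectors with even coordinate sum. -/
def intEven (n : ℕ) : Set (Fin n → ℤ) := {m | Even (∑ i, m i)}

/-- `ℤⁿ₋`: integer vectors with odd coordinate sum. -/
def intOdd (n : ℕ) : Set (Fin n → ℤ) := {m | Odd (∑ i, m i)}

/-- The doubly-even subcode `C₀` of a binary code. -/
def doublyEvenSub {n : ℕ} (C : Set (Fin n → ZMod 2)) : Set (Fin n → ZMod 2) :=
  {c | c ∈ C ∧ wt c % 4 = 0}

/-- The code shadow `S(C) = C₀⊥ \ C`. -/
def codeShadow {n : ℕ} (C : Set (Fin n → ZMod 2)) : Set (Fin n → ZMod 2) :=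
  dualCode (doublyEvenSub C) \ C


section Helpers
open scoped ENNReal NNReal

noncomputable def GG (q x : ℝ) : ℝ≥0∞ := ENNReal.ofReal (q ^ x)

lemma GG_ne_top (q x : ℝ) : GG q x ≠ ⊤ := ENNReal.ofReal_ne_top

lemma GG_add {q : ℝ} (hq : 0 < q) (x y : ℝ) : GG q (x + y) = GG q x * GG q y := by
  rw [GG, Real.rpow_add hq, ENNReal.ofReal_mul (Real.rpow_nonneg hq.le _)]; rfl

lemma GG_sum {q : ℝ} (hq : 0 < q) {ι : Type*} (s : Finset ι) (e : ι → ℝ) :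
    GG q (∑ i ∈ s, e i) = ∏ i ∈ s, GG q (e i) := by
  induction s using Finset.cons_induction with
  | empty => simp [GG]
  | cons a s ha ih => rw [Finset.sum_cons, Finset.prod_cons, GG_add hq, ih]

lemma GG_toReal {q : ℝ} (hq : 0 < q) (x : ℝ) : (GG q x).toReal = q ^ x :=
  ENNReal.toReal_ofReal (Real.rpow_nonneg hq.le _)

lemma real_tsum_eq_toReal {ι : Type*} (f : ι → ℝ) (hf : ∀ i, 0 ≤ f i) :
    ∑' i, f i = (∑' i, ENNReal.ofReal (f i)).toReal := by
  rw [ENNReal.tsum_toReal_eq (fun _ => ENNReal.ofReal_ne_top)]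
  exact tsum_congr fun i => (ENNReal.toReal_ofReal (hf i)).symm

lemma abs_le_quad {c a : ℝ} (hc : 0 < c) (x : ℝ) :
    |x| ≤ c * (x + a) ^ 2 + (1 / (4 * c) + |a|) := by
  have h1 : 0 ≤ (c * (x + a) - 1 / 2) ^ 2 := sq_nonneg _
  have h2 : 0 ≤ (c * (x + a) + 1 / 2) ^ 2 := sq_nonneg _
  have hK : 1 / (4 * c) * (4 * c) = 1 := by field_simp
  rcases abs_cases x with ⟨hx, _⟩ | ⟨hx, _⟩ <;> rcases abs_cases a with ⟨ha, _⟩ | ⟨ha, _⟩ <;>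
    rw [hx, ha] <;> nlinarith [h1, h2, hK, hc, mul_pos hc hc]

lemma summable_rpow_sq {q : ℝ} (hq0 : 0 < q) (hq1 : q < 1) (c a : ℝ) (hc : 0 < c) :
    Summable fun m : ℤ => q ^ (c * ((m : ℝ) + a) ^ 2) := by
  have hK : ∀ m : ℤ, q ^ (c * ((m : ℝ) + a) ^ 2)
      ≤ q ^ (-(1 / (4 * c) + |a|)) * q ^ (|(m : ℝ)|) := by
    intro m
    rw [← Real.rpow_add hq0]
    apply Real.rpow_le_rpow_of_exponent_ge hq0 hq1.le
    have := abs_le_quad hc (a := a) (m : ℝ)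
    linarith
  apply Summable.of_nonneg_of_le (fun m => Real.rpow_nonneg hq0.le _) hK
  apply Summable.mul_left
  have hrw : ∀ m : ℤ, q ^ (|(m : ℝ)|) = q ^ m.natAbs := by
    intro m
    have : |(m : ℝ)| = ((m.natAbs : ℕ) : ℝ) := by
      rw [Nat.cast_natAbs, Int.cast_abs]
    rw [this, Real.rpow_natCast]
  simp_rw [hrw]
  apply Summable.of_nat_of_neg
  · simpa [Int.natAbs_natCast] using summable_geometric_of_lt_one hq0.le hq1
  · simpa [Int.natAbs_neg] using summable_geometric_of_lt_one hq0.le hq1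

lemma tsumGG_ne_top {q : ℝ} (hq0 : 0 < q) (hq1 : q < 1) (c a : ℝ) (hc : 0 < c) :
    ∑' m : ℤ, GG q (c * ((m : ℝ) + a) ^ 2) ≠ ⊤ := by
  unfold GG
  rw [← ENNReal.ofReal_tsum_of_nonneg (fun m => Real.rpow_nonneg hq0.le _)
    (summable_rpow_sq hq0 hq1 c a hc)]
  exact ENNReal.ofReal_ne_top

lemma tsum_pi_prod : ∀ (n : ℕ) (g : Fin n → ℤ → ℝ≥0∞),
    ∑' m : Fin n → ℤ, ∏ i, g i (m i) = ∏ i, ∑' k : ℤ, g i k := by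
  intro n
  induction n with
  | zero =>
    intro g
    simp only [Finset.univ_eq_empty, Finset.prod_empty]
    exact tsum_eq_single (default) (fun b hb => (hb (Subsingleton.elim b default)).elim)
  | succ n ih =>
    intro g
    rw [← (Fin.consEquiv fun _ => ℤ).tsum_eq]
    have hrw : ∀ p : ℤ × (Fin n → ℤ),
        (∏ i, g i ((Fin.consEquiv fun _ => ℤ) p i))
          = g 0 p.1 * ∏ i : Fin n, g i.succ (p.2 i) := by
      intro p
      rw [Fin.prod_univ_succ]
      rfl
    simp_rw [hrw]
    rw [ENNReal.tsum_prod']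
    simp_rw [ENNReal.tsum_mul_left, ENNReal.tsum_mul_right]
    rw [Fin.prod_univ_succ, ih (fun i => g i.succ)]


noncomputable def AE (q : ℝ) : ℝ≥0∞ := ∑' m : ℤ, GG q (((m : ℝ) + 1/4) ^ 2)

lemma AE34 (q : ℝ) : ∑' m : ℤ, GG q (((m : ℝ) + 3/4) ^ 2) = AE q := by
  rw [AE, ← (Equiv.subLeft (-1 : ℤ)).tsum_eq (fun m : ℤ => GG q (((m : ℝ) + 3/4) ^ 2))]
  apply tsum_congr; intro m
  simp only [Equiv.subLeft_apply]
  congr 1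
  push_cast
  ring

noncomputable def TT2 (q : ℝ) : ℝ≥0∞ := ∑' m : ℤ, GG q (((m : ℝ) + 1/2) ^ 2 / 2)
noncomputable def TT3 (q : ℝ) : ℝ≥0∞ := ∑' m : ℤ, GG q ((m : ℝ) ^ 2 / 2)

def ψe : ℤ × ℤ → ℤ × ℤ := fun p => (p.1 + p.2, p.1 - p.2)
def ψo : ℤ × ℤ → ℤ × ℤ := fun p => (p.1 + p.2 + 1, p.1 - p.2)

lemma ψe_inj : Function.Injective ψe := by
  intro p p' h
  simp only [ψe, Prod.mk.injEq] at h
  have : p.1 = p'.1 ∧ p.2 = p'.2 := ⟨by omega, by omega⟩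
  exact Prod.ext this.1 this.2

lemma ψo_inj : Function.Injective ψo := by
  intro p p' h
  simp only [ψo, Prod.mk.injEq] at h
  have : p.1 = p'.1 ∧ p.2 = p'.2 := ⟨by omega, by omega⟩
  exact Prod.ext this.1 this.2

lemma range_union : Set.range ψe ∪ Set.range ψo = Set.univ := by
  ext p
  simp only [Set.mem_union, Set.mem_range, Set.mem_univ, iff_true]
  rcases Int.even_or_odd (p.1 + p.2) with ⟨k, hk⟩ | ⟨k, hk⟩
  · left
    refine ⟨(k, p.1 - k), ?_⟩
    simp only [ψe, Prod.ext_iff]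
    constructor <;> omega
  · right
    refine ⟨(k, p.1 - k - 1), ?_⟩
    simp only [ψo, Prod.ext_iff]
    constructor <;> omega

lemma range_disj : Disjoint (Set.range ψe) (Set.range ψo) := by
  rw [Set.disjoint_left]
  rintro p ⟨u, rfl⟩ ⟨v, hv⟩
  simp only [ψe, ψo, Prod.mk.injEq] at hv
  omega

lemma TT2_mul_TT3 {q : ℝ} (hq : 0 < q) : TT2 q * TT3 q = 2 * (AE q) ^ 2 := by
  set F : ℤ × ℤ → ℝ≥0∞ := fun p => GG q (((p.1 : ℝ) + 1/2) ^ 2 / 2) * GG q ((p.2 : ℝ) ^ 2 / 2)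
    with hF
  have h1 : TT2 q * TT3 q = ∑' p : ℤ × ℤ, F p := by
    rw [TT2, TT3, ENNReal.tsum_prod', ← ENNReal.tsum_mul_right]
    exact tsum_congr fun a => (ENNReal.tsum_mul_left).symm
  have h2 : ∑' p : ℤ × ℤ, F p = (∑' p : Set.range ψe, F p) + ∑' p : Set.range ψo, F p := by
    rw [← tsum_univ F, ← range_union, Summable.tsum_union_disjoint range_disj ENNReal.summable
      ENNReal.summable]
  have he : ∑' p : Set.range ψe, F p = AE q * AE q := by
    rw [tsum_range F ψe_inj]
    have : ∀ p : ℤ × ℤ, F (ψe p) = GG q (((p.1 : ℝ) + 1/4) ^ 2) * GG q (((p.2 : ℝ) + 1/4) ^ 2) := by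
      intro p
      simp only [hF, ψe, ← GG_add hq]
      congr 1
      push_cast
      ring
    simp_rw [this]
    rw [ENNReal.tsum_prod']
    simp_rw [ENNReal.tsum_mul_left, ENNReal.tsum_mul_right]
    rfl
  have ho : ∑' p : Set.range ψo, F p = AE q * AE q := by
    rw [tsum_range F ψo_inj]
    have : ∀ p : ℤ × ℤ, F (ψo p) = GG q (((p.1 : ℝ) + 3/4) ^ 2) * GG q (((p.2 : ℝ) + 3/4) ^ 2) := by
      intro p
      simp only [hF, ψo, ← GG_add hq]
      congr 1
      push_cast
      ring
    simp_rw [this]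
    rw [ENNReal.tsum_prod']
    simp_rw [ENNReal.tsum_mul_left, ENNReal.tsum_mul_right]
    rw [AE34]
  rw [h1, h2, he, ho, sq, two_mul]



section CodeLemmas
variable {n : ℕ} {C : Set (Fin n → ZMod 2)}

lemma zmod2_cases (x : ZMod 2) : x = 0 ∨ x = 1 := by
  have h : ∀ y : ZMod 2, y = 0 ∨ y = 1 := by decide
  exact h x

lemma codeDot_eq_card (c c' : Fin n → ZMod 2) :
    codeDot c c' = ((Finset.univ.filter fun i => c i = 1 ∧ c' i = 1).card : ZMod 2) := by
  rw [codeDot, ← Finset.sum_boole]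
  apply Finset.sum_congr rfl
  intro i _
  rcases zmod2_cases (c i) with h | h <;> rcases zmod2_cases (c' i) with h' | h' <;>
    rw [h, h'] <;> decide

lemma dual_zero_mem : (0 : Fin n → ZMod 2) ∈ dualCode C := by
  intro c _; simp [codeDot]

lemma codeDot_add_right (d c c' : Fin n → ZMod 2) :
    codeDot d (c + c') = codeDot d c + codeDot d c' := by
  unfold codeDot
  simp [Pi.add_apply, mul_add, Finset.sum_add_distrib]

lemma self_dual_add_mem (hC : C = dualCode C) {c c' : Fin n → ZMod 2}
    (h1 : c ∈ C) (h2 : c' ∈ C) : c + c' ∈ C := by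
  rw [hC]
  intro d hd
  have e1 : codeDot d c = 0 := by rw [hC] at h1; exact h1 d hd
  have e2 : codeDot d c' = 0 := by rw [hC] at h2; exact h2 d hd
  rw [codeDot_add_right, e1, e2, add_zero]

lemma overlap_even (hC : C = dualCode C) {c c' : Fin n → ZMod 2}
    (h1 : c ∈ C) (h2 : c' ∈ C) :
    2 ∣ (Finset.univ.filter fun i => c i = 1 ∧ c' i = 1).card := by
  have h0 : codeDot c c' = 0 := by rw [hC] at h2; exact h2 c h1
  rw [codeDot_eq_card] at h0
  exact (ZMod.natCast_eq_zero_iff _ 2).mp h0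

lemma wt_even (hC : C = dualCode C) {c : Fin n → ZMod 2} (h1 : c ∈ C) : 2 ∣ wt c := by
  have h := overlap_even hC h1 h1
  have hset : (Finset.univ.filter fun i => c i = 1 ∧ c i = 1)
      = Finset.univ.filter fun i => c i = 1 := by
    apply Finset.filter_congr
    intro i _
    simp
  rw [hset] at h
  exact h

lemma card_self_dual (hC : C = dualCode C) :
    ∃ d : ℕ, n = 2 * d ∧ Nat.card C = 2 ^ d := by
  classical
  have hzero : (0 : Fin n → ZMod 2) ∈ C := by rw [hC]; exact dual_zero_mem
  let W : Submodule (ZMod 2) (Fin n → ZMod 2) :=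
    { carrier := C
      add_mem' := fun ha hb => self_dual_add_mem hC ha hb
      zero_mem' := hzero
      smul_mem' := by
        intro r x hx
        rcases zmod2_cases r with h | h <;> rw [h]
        · rw [zero_smul]; exact hzero
        · rw [one_smul]; exact hx }
  let B : LinearMap.BilinForm (ZMod 2) (Fin n → ZMod 2) :=
    LinearMap.mk₂ (ZMod 2) (fun x y => ∑ i, x i * y i)
      (fun m₁ m₂ n' => by simp [add_mul, Finset.sum_add_distrib])
      (fun r m n' => by simp [Finset.mul_sum, mul_assoc])
      (fun m n₁ n₂ => by simp [mul_add, Finset.sum_add_distrib])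
      (fun r m n' => by simp [Finset.mul_sum, mul_left_comm])
  have hBapply : ∀ x y, B x y = ∑ i, x i * y i := fun x y => rfl
  have hsymm : ∀ x y, B x y = B y x := by
    intro x y
    rw [hBapply, hBapply]
    exact Finset.sum_congr rfl fun i _ => mul_comm _ _
  have hrefl : B.IsRefl := by
    intro x y h
    rwa [hsymm]
  have hnd : B.Nondegenerate := by
    refine (fun hL : B.SeparatingLeft => ⟨hL, fun y hy => hL y fun x => by rw [hsymm]; exact hy x⟩) ?_
    intro m h
    funext i
    have hm := h (Pi.single i 1)
    rw [hBapply] at hm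
    simp only [Pi.single_apply, mul_ite, mul_one, mul_zero, Finset.sum_ite_eq',
      Finset.mem_univ, if_true] at hm
    exact hm
  have horth : B.orthogonal W = W := by
    ext x
    rw [LinearMap.BilinForm.mem_orthogonal_iff]
    constructor
    · intro hx
      show x ∈ C
      rw [hC]
      intro c hc
      exact hx c hc
    · intro hx c hc
      have hx' : x ∈ dualCode C := hC ▸ hx
      exact hx' c hc
  have hfr := LinearMap.BilinForm.finrank_add_finrank_orthogonal (B := B) hrefl W
  rw [horth, LinearMap.BilinForm.orthogonal_top_eq_bot hnd, inf_bot_eq, finrank_bot, add_zero,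
    Module.finrank_fin_fun] at hfr
  refine ⟨Module.finrank (ZMod 2) W, by omega, ?_⟩
  have fW : Fintype W := Fintype.ofFinite W
  have hcard : Nat.card W = 2 ^ Module.finrank (ZMod 2) W := by
    rw [Nat.card_eq_fintype_card, Module.card_eq_pow_finrank (K := ZMod 2) (V := W), ZMod.card 2]
  rw [← hcard]
  exact Nat.card_congr (Equiv.subtypeEquivRight fun x => Iff.rfl)

end CodeLemmas

section LatticeLemmas
variable {n : ℕ}

/-- Integer-parameterized lattice point. -/
noncomputable def Phi (c : Fin n → ZMod 2) (m : Fin n → ℤ) : Fin n → ℝ :=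
  fun i => (((c i).val : ℝ) + 2 * (m i : ℝ)) / Real.sqrt 2

lemma sqrt2_sq : Real.sqrt 2 * Real.sqrt 2 = 2 := Real.mul_self_sqrt (by norm_num)

lemma sqrt2_ne : Real.sqrt 2 ≠ 0 := by positivity

lemma dot_sqrt2 (f g : Fin n → ℝ) :
    dot (fun i => f i / Real.sqrt 2) (fun i => g i / Real.sqrt 2) = (∑ i, f i * g i) / 2 := by
  rw [dot, Finset.sum_div]
  apply Finset.sum_congr rfl
  intro i _
  rw [div_mul_div_comm, sqrt2_sq]

lemma Phi_mem {C : Set (Fin n → ZMod 2)} {c : Fin n → ZMod 2} (hc : c ∈ C) (m : Fin n → ℤ) :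
    Phi c m ∈ constructionA C := ⟨c, hc, m, rfl⟩

lemma constructionA_eq_Phi {C : Set (Fin n → ZMod 2)} {x : Fin n → ℝ}
    (hx : x ∈ constructionA C) : ∃ c ∈ C, ∃ m : Fin n → ℤ, x = Phi c m := hx

lemma shift_coord (c : Fin n → ZMod 2) (m : Fin n → ℤ) (i : Fin n) :
    (Phi c m + (2 : ℝ)⁻¹ • deltaAll n) i
      = (((c i).val : ℝ) + 2 * (m i : ℝ) + 1/2) / Real.sqrt 2 := by
  simp only [Phi, deltaAll, Pi.add_apply, Pi.smul_apply, smul_eq_mul]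
  field_simp

lemma shift_coord' (c : Fin n → ZMod 2) (m : Fin n → ℤ) (i : Fin n) :
    Phi c m i + ((2 : ℝ)⁻¹ • deltaAll n) i
      = (((c i).val : ℝ) + 2 * (m i : ℝ) + 1/2) / Real.sqrt 2 := by
  rw [← Pi.add_apply (Phi c m)]
  exact shift_coord c m i

lemma val_int_cases (x : ZMod 2) : ((x.val : ℤ) = 0 ∧ x = 0) ∨ ((x.val : ℤ) = 1 ∧ x = 1) := by
  have h : ∀ y : ZMod 2, ((y.val : ℤ) = 0 ∧ y = 0) ∨ ((y.val : ℤ) = 1 ∧ y = 1) := by decide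
  exact h x

lemma sum_val_eq_wt (c : Fin n → ZMod 2) : ∑ i, ((c i).val : ℤ) = (wt c : ℤ) := by
  rw [wt, ← Finset.sum_boole]
  apply Finset.sum_congr rfl
  intro i _
  rcases val_int_cases (c i) with ⟨h1, h2⟩ | ⟨h1, h2⟩ <;> rw [h1, h2] <;> simp

lemma dot_delta (c : Fin n → ZMod 2) (m : Fin n → ℤ) :
    dot (deltaAll n) (Phi c m)
      = (((∑ i, (((c i).val : ℤ) + 2 * m i) : ℤ) : ℝ)) / 2 := by
  have h1 : deltaAll n = fun (_ : Fin n) => (1 : ℝ) / Real.sqrt 2 := rfl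
  have h2 : Phi c m = fun i => ((((c i).val : ℝ)) + 2 * (m i : ℝ)) / Real.sqrt 2 := rfl
  rw [h1, h2, dot_sqrt2]
  push_cast
  congr 1
  apply Finset.sum_congr rfl
  intro i _
  ring

/-- The norm exponent of a shifted lattice vector. -/
lemma dot_shifted (c : Fin n → ZMod 2) (m : Fin n → ℤ) :
    dot (Phi c m + (2 : ℝ)⁻¹ • deltaAll n) (Phi c m + (2 : ℝ)⁻¹ • deltaAll n) / 2
      = ∑ i, (((c i).val : ℝ) + 2 * (m i : ℝ) + 1/2) ^ 2 / 4 := by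
  have h : (Phi c m + (2 : ℝ)⁻¹ • deltaAll n)
      = fun i => ((((c i).val : ℝ) + 2 * (m i : ℝ) + 1/2)) / Real.sqrt 2 :=
    funext (shift_coord c m)
  rw [h, dot_sqrt2, div_div, ← Finset.sum_div]
  norm_num
  congr 1
  funext i
  ring

end LatticeLemmas

section LatticeLemmas2
variable {n : ℕ}

lemma val_real_cases (x : ZMod 2) : (((x.val : ℝ)) = 0 ∧ x = 0) ∨ (((x.val : ℝ)) = 1 ∧ x = 1) := by
  rcases val_int_cases x with ⟨h1, h2⟩ | ⟨h1, h2⟩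
  · left; exact ⟨by exact_mod_cast h1, h2⟩
  · right; exact ⟨by exact_mod_cast h1, h2⟩

lemma coord_tsum {q : ℝ} (v : ZMod 2) :
    ∑' k : ℤ, GG q ((((v.val : ℝ)) + 2 * (k : ℝ) + 1/2) ^ 2 / 4) = AE q := by
  rcases val_real_cases v with ⟨h1, _⟩ | ⟨h1, _⟩
  · rw [AE]
    apply tsum_congr
    intro k
    rw [h1]
    congr 1
    ring
  · rw [← AE34 q]
    apply tsum_congr
    intro k
    rw [h1]
    congr 1
    ring

lemma phi_shift_injective {C : Set (Fin n → ZMod 2)} :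
    Function.Injective (fun p : C × (Fin n → ℤ) =>
      Phi (p.1 : Fin n → ZMod 2) p.2 + (2 : ℝ)⁻¹ • deltaAll n) := by
  rintro ⟨c, m⟩ ⟨c', m'⟩ h
  simp only [add_left_inj] at h
  have hcoord : ∀ i, ((((c : Fin n → ZMod 2)) i).val : ℤ) + 2 * m i
      = ((((c' : Fin n → ZMod 2)) i).val : ℤ) + 2 * m' i := by
    intro i
    have h1 := congrFun h i
    simp only [Phi] at h1
    rw [div_eq_div_iff sqrt2_ne sqrt2_ne, mul_left_inj' sqrt2_ne] at h1
    exact_mod_cast h1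
  have hc : c = c' := by
    apply Subtype.ext
    funext i
    have := hcoord i
    rcases val_int_cases ((c : Fin n → ZMod 2) i) with ⟨h1, h2⟩ | ⟨h1, h2⟩ <;>
      rcases val_int_cases ((c' : Fin n → ZMod 2) i) with ⟨h1', h2'⟩ | ⟨h1', h2'⟩ <;>
        rw [h2, h2'] <;> rw [h1, h1'] at this <;> omega
  have hm : m = m' := by
    funext i
    have := hcoord i
    rcases val_int_cases ((c : Fin n → ZMod 2) i) with ⟨h1, _⟩ | ⟨h1, _⟩ <;>
      rcases val_int_cases ((c' : Fin n → ZMod 2) i) with ⟨h1', _⟩ | ⟨h1', _⟩ <;>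
        rw [h1, h1'] at this <;> omega
  exact Prod.ext hc hm

lemma TE_total {q : ℝ} (hq0 : 0 < q) (C : Set (Fin n → ZMod 2)) :
    ∑' l : (shiftSet (constructionA C) ((2 : ℝ)⁻¹ • deltaAll n)),
        GG q (dot (l : Fin n → ℝ) (l : Fin n → ℝ) / 2)
      = (Nat.card C : ℝ≥0∞) * (AE q) ^ n := by
  classical
  set w : Fin n → ℝ := (2 : ℝ)⁻¹ • deltaAll n with hw
  set T : Set (Fin n → ℝ) := shiftSet (constructionA C) w with hT
  let Φ : C × (Fin n → ℤ) → T := fun p =>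
    ⟨Phi (p.1 : Fin n → ZMod 2) p.2 + w, Phi (p.1 : Fin n → ZMod 2) p.2,
      Phi_mem p.1.2 p.2, rfl⟩
  have hbij : Function.Bijective Φ := by
    constructor
    · intro p p' h
      exact phi_shift_injective (congrArg Subtype.val h)
    · rintro ⟨x, y, ⟨c, hc, m, rfl⟩, rfl⟩
      exact ⟨(⟨c, hc⟩, m), rfl⟩
  rw [← (Equiv.ofBijective Φ hbij).tsum_eq]
  have hterm : ∀ p : C × (Fin n → ℤ),
      GG q (dot ((Φ p : Fin n → ℝ)) ((Φ p : Fin n → ℝ)) / 2)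
        = ∏ i, GG q (((((p.1 : Fin n → ZMod 2) i).val : ℝ) + 2 * (p.2 i : ℝ) + 1/2) ^ 2 / 4) := by
    intro p
    have : (Φ p : Fin n → ℝ) = Phi (p.1 : Fin n → ZMod 2) p.2 + w := rfl
    rw [this, hw, dot_shifted, GG_sum hq0]
  simp only [Equiv.ofBijective_apply, hterm]
  rw [ENNReal.tsum_prod']
  have hinner : ∀ c : C, ∑' m : Fin n → ℤ,
      ∏ i, GG q (((((c : Fin n → ZMod 2) i).val : ℝ) + 2 * (m i : ℝ) + 1/2) ^ 2 / 4)
        = (AE q) ^ n := by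
    intro c
    rw [tsum_pi_prod n (fun i k =>
      GG q (((((c : Fin n → ZMod 2) i).val : ℝ) + 2 * (k : ℝ) + 1/2) ^ 2 / 4))]
    rw [Finset.prod_congr rfl (fun i _ => coord_tsum ((c : Fin n → ZMod 2) i))]
    rw [Finset.prod_const, Finset.card_univ, Fintype.card_fin]
  simp only [hinner]
  have : Fintype C := Fintype.ofFinite _
  rw [tsum_fintype, Finset.sum_const, Finset.card_univ, nsmul_eq_mul, Nat.card_eq_fintype_card]

end LatticeLemmas2

section LatticeLemmas3
variable {n : ℕ}

lemma zmod2_val_add_one_int (x : ZMod 2) : (((x + 1).val : ℤ)) = 1 - (x.val : ℤ) := by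
  have h : ∀ y : ZMod 2, (((y + 1).val : ℤ)) = 1 - (y.val : ℤ) := by decide
  exact h x

lemma zmod2_val_add_one_real (x : ZMod 2) : (((x + 1).val : ℝ)) = 1 - (x.val : ℝ) := by
  exact_mod_cast congrArg (Int.cast : ℤ → ℝ) (zmod2_val_add_one_int x)

lemma dot_delta_int {C : Set (Fin n → ZMod 2)} (hC : C = dualCode C) {c : Fin n → ZMod 2}
    (hc : c ∈ C) (m : Fin n → ℤ) :
    ∃ k : ℤ, dot (deltaAll n) (Phi c m) = (k : ℝ) := by
  have hsplit : ∑ i, (((c i).val : ℤ) + 2 * m i) = (wt c : ℤ) + 2 * ∑ i, m i := by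
    rw [Finset.sum_add_distrib, sum_val_eq_wt, ← Finset.mul_sum]
  have h2 : 2 ∣ wt c := wt_even hC hc
  have h2' : (2 : ℤ) ∣ (wt c : ℤ) := by exact_mod_cast h2
  obtain ⟨k, hk⟩ : ∃ k : ℤ, ∑ i, (((c i).val : ℤ) + 2 * m i) = 2 * k := by
    obtain ⟨j, hj⟩ := h2'
    exact ⟨j + ∑ i, m i, by rw [hsplit, hj]; ring⟩
  refine ⟨k, ?_⟩
  rw [dot_delta, hk]
  push_cast
  ring

lemma deltaEO_union {C : Set (Fin n → ZMod 2)} (hC : C = dualCode C) :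
    deltaEven (constructionA C) (deltaAll n) ∪ deltaOdd (constructionA C) (deltaAll n)
      = constructionA C := by
  apply Set.Subset.antisymm
  · rintro l (⟨hl, _⟩ | ⟨hl, _⟩) <;> exact hl
  · intro l hl
    obtain ⟨c, hc, m, rfl⟩ := constructionA_eq_Phi hl
    obtain ⟨k, hk⟩ := dot_delta_int hC hc m
    rcases Int.even_or_odd k with ⟨j, hj⟩ | ⟨j, hj⟩
    · left
      exact ⟨Phi_mem hc m, j, by rw [hk, hj]; push_cast; ring⟩
    · right
      exact ⟨Phi_mem hc m, j, by rw [hk, hj]; push_cast; ring⟩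

lemma deltaEO_disj (L : Set (Fin n → ℝ)) (δ : Fin n → ℝ) :
    Disjoint (deltaEven L δ) (deltaOdd L δ) := by
  rw [Set.disjoint_left]
  rintro l ⟨_, k, hk⟩ ⟨_, k', hk'⟩
  rw [hk] at hk'
  have : 2 * k = 2 * k' + 1 := by exact_mod_cast hk'
  omega

/-- Sign flip on the support of a codeword. -/
def sgm (cs : Fin n → ZMod 2) (y : Fin n → ℝ) : Fin n → ℝ :=
  fun i => if cs i = 1 then -y i else y i

lemma sgm_invol (cs : Fin n → ZMod 2) : Function.Involutive (sgm cs) := by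
  intro y
  funext i
  by_cases h : cs i = 1 <;> simp [sgm, h]

lemma dot_sgm (cs : Fin n → ZMod 2) (y : Fin n → ℝ) : dot (sgm cs y) (sgm cs y) = dot y y := by
  rw [dot, dot]
  apply Finset.sum_congr rfl
  intro i _
  by_cases h : cs i = 1 <;> simp [sgm, h, neg_mul_neg]

lemma flip_lemma {C : Set (Fin n → ZMod 2)} (hC : C = dualCode C) {cs : Fin n → ZMod 2}
    (hcs : cs ∈ C) (hwt : wt cs % 4 = 2) {c : Fin n → ZMod 2} (hc : c ∈ C) (m : Fin n → ℤ) :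
    ∃ c' ∈ C, ∃ m' : Fin n → ℤ,
      sgm cs (Phi c m + (2 : ℝ)⁻¹ • deltaAll n) = Phi c' m' + (2 : ℝ)⁻¹ • deltaAll n ∧
      ∃ u : ℤ, u % 2 = 1 ∧
        dot (deltaAll n) (Phi c' m') = dot (deltaAll n) (Phi c m) - (u : ℝ) := by
  classical
  refine ⟨c + cs, self_dual_add_mem hC hc hcs,
    (fun i => if cs i = 1 then -1 - m i else m i), ?_, ?_⟩
  · funext i
    by_cases h : cs i = 1
    · have hcc : (c + cs) i = c i + 1 := by rw [Pi.add_apply, h]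
      simp only [sgm, h, if_true, Pi.add_apply]
      rw [shift_coord', shift_coord', hcc, zmod2_val_add_one_real]
      simp only [h, if_true]
      rw [← neg_div]
      congr 1
      push_cast
      ring
    · have h0 : cs i = 0 := by
        rcases zmod2_cases (cs i) with h' | h'
        · exact h'
        · exact absurd h' h
      have hcc : (c + cs) i = c i := by rw [Pi.add_apply, h0, add_zero]
      simp only [sgm, h, if_false, Pi.add_apply]
      rw [shift_coord', shift_coord', hcc]
      simp only [h, if_false]
  · have key : ∃ u : ℤ, u % 2 = 1 ∧
        ∑ i, ((((c + cs) i).val : ℤ) + 2 * (if cs i = 1 then -1 - m i else m i))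
          = ∑ i, (((c i).val : ℤ) + 2 * m i) - 2 * u := by
      have hA'A : ∀ i, (((c + cs) i).val : ℤ) + 2 * (if cs i = 1 then -1 - m i else m i)
          = (((c i).val : ℤ) + 2 * m i)
            - (if cs i = 1 then 1 + 2 * (((c i).val : ℤ) + 2 * m i) else 0) := by
        intro i
        by_cases h : cs i = 1
        · have hcc : (c + cs) i = c i + 1 := by rw [Pi.add_apply, h]
          rw [hcc, zmod2_val_add_one_int]
          simp only [h, if_true]
          ring
        · have h0 : cs i = 0 := by
            rcases zmod2_cases (cs i) with h' | h'
            · exact h'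
            · exact absurd h' h
          have hcc : (c + cs) i = c i := by rw [Pi.add_apply, h0, add_zero]
          rw [hcc]
          simp only [h, if_false]
          ring
      have hsum : ∑ i, ((((c + cs) i).val : ℤ) + 2 * (if cs i = 1 then -1 - m i else m i))
          = ∑ i, (((c i).val : ℤ) + 2 * m i)
            - ∑ i, (if cs i = 1 then 1 + 2 * (((c i).val : ℤ) + 2 * m i) else 0) := by
        rw [← Finset.sum_sub_distrib]
        exact Finset.sum_congr rfl fun i _ => hA'A i
      have hSsum : ∑ i, (if cs i = 1 then 1 + 2 * (((c i).val : ℤ) + 2 * m i) else 0)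
          = (wt cs : ℤ) + 2 * ∑ i ∈ Finset.univ.filter (fun i => cs i = 1),
              (((c i).val : ℤ) + 2 * m i) := by
        rw [← Finset.sum_filter, Finset.sum_add_distrib, Finset.sum_const, nsmul_eq_mul,
          mul_one, ← Finset.mul_sum, wt]
      have hval_filt : ∑ i ∈ Finset.univ.filter (fun i => cs i = 1), ((c i).val : ℤ)
          = ((Finset.univ.filter fun i => c i = 1 ∧ cs i = 1).card : ℤ) := by
        have hcongr : ∀ i ∈ Finset.univ.filter (fun i => cs i = 1),
            ((c i).val : ℤ) = if c i = 1 then (1 : ℤ) else 0 := by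
          intro i _
          rcases val_int_cases (c i) with ⟨h1, h2⟩ | ⟨h1, h2⟩
          · rw [h1, h2, if_neg (by decide : ¬(0 : ZMod 2) = 1)]
          · rw [h1, h2, if_pos rfl]
        rw [Finset.sum_congr rfl hcongr, Finset.sum_boole, Finset.filter_filter]
        congr 2
        apply Finset.filter_congr
        intro i _
        simp [and_comm]
      have hAfilt : ∑ i ∈ Finset.univ.filter (fun i => cs i = 1), (((c i).val : ℤ) + 2 * m i)
          = ((Finset.univ.filter fun i => c i = 1 ∧ cs i = 1).card : ℤ)
            + 2 * ∑ i ∈ Finset.univ.filter (fun i => cs i = 1), m i := by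
        rw [Finset.sum_add_distrib, hval_filt, ← Finset.mul_sum]
      have hov : 2 ∣ (Finset.univ.filter fun i => c i = 1 ∧ cs i = 1).card :=
        overlap_even hC hc hcs
      refine ⟨(wt cs : ℤ) / 2 + ((Finset.univ.filter fun i => c i = 1 ∧ cs i = 1).card : ℤ)
        + 2 * ∑ i ∈ Finset.univ.filter (fun i => cs i = 1), m i, ?_, ?_⟩
      · omega
      · rw [hsum, hSsum, hAfilt]
        omega
    obtain ⟨u, hu1, hu2⟩ := key
    refine ⟨u, hu1, ?_⟩
    rw [dot_delta, dot_delta, hu2]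
    push_cast
    ring

end LatticeLemmas3

section LatticeLemmas4
variable {n : ℕ}

lemma sgm_image {C : Set (Fin n → ZMod 2)} (hC : C = dualCode C) {cs : Fin n → ZMod 2}
    (hcs : cs ∈ C) (hwt : wt cs % 4 = 2) :
    sgm cs '' shiftSet (deltaEven (constructionA C) (deltaAll n)) ((2 : ℝ)⁻¹ • deltaAll n)
      = shiftSet (deltaOdd (constructionA C) (deltaAll n)) ((2 : ℝ)⁻¹ • deltaAll n) := by
  apply Set.Subset.antisymm
  · rintro y ⟨z, ⟨l, ⟨hlΛ, k, hk⟩, rfl⟩, rfl⟩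
    obtain ⟨c, hc, m, rfl⟩ := constructionA_eq_Phi hlΛ
    obtain ⟨c', hc', m', heq, u, hu, hdot⟩ := flip_lemma hC hcs hwt hc m
    obtain ⟨k', hk'⟩ : ∃ k' : ℤ, 2 * k - u = 2 * k' + 1 := ⟨(2 * k - u - 1) / 2, by omega⟩
    refine ⟨Phi c' m', ⟨Phi_mem hc' m', k', ?_⟩, heq.symm⟩
    rw [hdot, hk]
    exact_mod_cast hk'
  · rintro y ⟨l, ⟨hlΛ, k, hk⟩, rfl⟩
    obtain ⟨c, hc, m, rfl⟩ := constructionA_eq_Phi hlΛ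
    obtain ⟨c', hc', m', heq, u, hu, hdot⟩ := flip_lemma hC hcs hwt hc m
    obtain ⟨k', hk'⟩ : ∃ k' : ℤ, 2 * k + 1 - u = 2 * k' := ⟨(2 * k + 1 - u) / 2, by omega⟩
    refine ⟨Phi c' m' + (2 : ℝ)⁻¹ • deltaAll n,
      ⟨Phi c' m', ⟨Phi_mem hc' m', k', ?_⟩, rfl⟩, ?_⟩
    · rw [hdot, hk]
      exact_mod_cast hk'
    · rw [← heq]
      exact sgm_invol cs _

lemma thetaSet_eq {q : ℝ} (hq0 : 0 < q) (L : Set (Fin n → ℝ)) :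
    thetaSet L q = (∑' l : L, GG q (dot (l : Fin n → ℝ) (l : Fin n → ℝ) / 2)).toReal := by
  rw [thetaSet, real_tsum_eq_toReal _ (fun l => Real.rpow_nonneg hq0.le _)]
  rfl

lemma AE_ne_top {q : ℝ} (hq0 : 0 < q) (hq1 : q < 1) : AE q ≠ ⊤ := by
  rw [AE]
  have h := tsumGG_ne_top hq0 hq1 1 (1/4) one_pos
  simpa [one_mul] using h

end LatticeLemmas4

end Helpers

open scoped ENNReal NNReal

/-- theta functions of the shifted cosets `Λ_even + δ/2` and `Λ_odd + δ/2`. -/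
theorem theta_shifted_cosets {n : ℕ} (C : Set (Fin n → ZMod 2))
    (hC : IsSinglyEvenSelfDual C) (q : ℝ) (hq0 : 0 < q) (hq1 : q < 1) :
    thetaSet (shiftSet (deltaEven (constructionA C) (deltaAll n)) ((2 : ℝ)⁻¹ • deltaAll n)) q
      = (theta2 q * theta3 q) ^ ((n : ℝ) / 2) / 2 ∧
    thetaSet (shiftSet (deltaOdd (constructionA C) (deltaAll n)) ((2 : ℝ)⁻¹ • deltaAll n)) q
      = (theta2 q * theta3 q) ^ ((n : ℝ) / 2) / 2 := by
  classical
  obtain ⟨hdual, c0, hc0, hwt0⟩ := hC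
  have h2 : 2 ∣ wt c0 := wt_even hdual hc0
  have hwt2 : wt c0 % 4 = 2 := by omega
  obtain ⟨d, hnd, hcard⟩ := card_self_dual hdual
  set w : Fin n → ℝ := (2 : ℝ)⁻¹ • deltaAll n with hw
  set Se : Set (Fin n → ℝ) := shiftSet (deltaEven (constructionA C) (deltaAll n)) w with hSe
  set So : Set (Fin n → ℝ) := shiftSet (deltaOdd (constructionA C) (deltaAll n)) w with hSo
  have hTeTo : (∑' l : Se, GG q (dot (l : Fin n → ℝ) (l : Fin n → ℝ) / 2))
      = ∑' l : So, GG q (dot (l : Fin n → ℝ) (l : Fin n → ℝ) / 2) := by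
    conv_rhs => rw [show So = sgm c0 '' Se from (sgm_image hdual hc0 hwt2).symm]
    rw [tsum_image (fun y : Fin n → ℝ => GG q (dot y y / 2)) ((sgm_invol c0).injective.injOn)]
    exact tsum_congr fun x => by rw [dot_sgm]
  have hunion : Se ∪ So = shiftSet (constructionA C) w := by
    rw [hSe, hSo, shiftSet, shiftSet, shiftSet, ← Set.image_union, deltaEO_union hdual]
  have hdisj : Disjoint Se So := by
    rw [hSe, hSo, shiftSet, shiftSet]
    exact (Set.disjoint_image_iff (add_left_injective w)).mpr (deltaEO_disj _ _)
  have hsplit : (∑' l : Se, GG q (dot (l : Fin n → ℝ) (l : Fin n → ℝ) / 2))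
      + (∑' l : So, GG q (dot (l : Fin n → ℝ) (l : Fin n → ℝ) / 2))
      = (Nat.card C : ℝ≥0∞) * (AE q) ^ n := by
    rw [← Summable.tsum_union_disjoint (f := fun x : Fin n → ℝ => GG q (dot x x / 2)) hdisj
      ENNReal.summable ENNReal.summable, hunion]
    exact TE_total hq0 C
  have hAE : AE q ≠ ⊤ := AE_ne_top hq0 hq1
  have htot : (Nat.card C : ℝ≥0∞) * (AE q) ^ n ≠ ⊤ :=
    ENNReal.mul_ne_top (ENNReal.natCast_ne_top _) (ENNReal.pow_ne_top hAE)
  have hSe_ne : (∑' l : Se, GG q (dot (l : Fin n → ℝ) (l : Fin n → ℝ) / 2)) ≠ ⊤ := by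
    apply ne_top_of_le_ne_top htot
    rw [← hsplit]
    exact le_self_add
  have hsum2 : (∑' l : Se, GG q (dot (l : Fin n → ℝ) (l : Fin n → ℝ) / 2))
      + (∑' l : Se, GG q (dot (l : Fin n → ℝ) (l : Fin n → ℝ) / 2))
      = (Nat.card C : ℝ≥0∞) * (AE q) ^ n := by
    nth_rewrite 2 [hTeTo]
    exact hsplit
  have hval : ((Nat.card C : ℝ≥0∞) * (AE q) ^ n).toReal = 2 ^ d * (AE q).toReal ^ n := by
    rw [ENNReal.toReal_mul, ENNReal.toReal_pow, hcard]
    norm_num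
  have hkey : thetaSet Se q = (2 ^ d * (AE q).toReal ^ n) / 2 := by
    rw [thetaSet_eq hq0]
    have h := congrArg ENNReal.toReal hsum2
    rw [ENNReal.toReal_add hSe_ne hSe_ne, hval] at h
    linarith
  have hkeyo : thetaSet So q = (2 ^ d * (AE q).toReal ^ n) / 2 := by
    rw [thetaSet_eq hq0, ← hTeTo, ← thetaSet_eq hq0]
    exact hkey
  have hθ2 : theta2 q = (TT2 q).toReal := by
    rw [theta2, real_tsum_eq_toReal _ (fun m => Real.rpow_nonneg hq0.le _)]
    rfl
  have hθ3 : theta3 q = (TT3 q).toReal := by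
    rw [theta3, real_tsum_eq_toReal _ (fun m => Real.rpow_nonneg hq0.le _)]
    rfl
  have hprod : theta2 q * theta3 q = 2 * (AE q).toReal ^ 2 := by
    rw [hθ2, hθ3, ← ENNReal.toReal_mul, TT2_mul_TT3 hq0, ENNReal.toReal_mul,
      ENNReal.toReal_pow, ENNReal.toReal_ofNat]
  have hRHS : (theta2 q * theta3 q) ^ ((n : ℝ) / 2) = 2 ^ d * (AE q).toReal ^ n := by
    rw [hprod, hnd]
    have hexp : ((2 * d : ℕ) : ℝ) / 2 = ((d : ℕ) : ℝ) := by push_cast; ring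
    rw [hexp, Real.rpow_natCast, mul_pow, ← pow_mul]
  exact ⟨by rw [hkey, hRHS], by rw [hkeyo, hRHS]⟩


end PaperFormal
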